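/- arXiv:2211.12106 — 2 statements merged into one kernel-verified Lean document; each statement's English description precedes it below -/
import Mathlib

section
/- The polynomial γ(x,y) = −2x⁴ − 2y⁴ + 12x²y² − 4y³ + 12x²y + x² − y² − 3y + 10 is harmonic on ℝ², is even in x, and has critical points at (−1/2, 0) and (1/2, 0), both of which are non-degenerate (the Hessian determinant at each is nonzero). -/
open ContinuousLinearMap

noncomputable def myClm (a b : ℝ) : ℝ × ℝ →L[ℝ] ℝ :=
  a • ContinuousLinearMap.fst ℝ ℝ ℝ + b • ContinuousLinearMap.snd ℝ ℝ ℝ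

@[simp] lemma myClm_apply (a b : ℝ) (v : ℝ × ℝ) : myClm a b v = a * v.1 + b * v.2 := by
  simp [myClm]

noncomputable def G : ℝ × ℝ → ℝ := fun p =>
  -2 * p.1 ^ 4 - 2 * p.2 ^ 4 + 12 * p.1 ^ 2 * p.2 ^ 2 - 4 * p.2 ^ 3 +
    12 * p.1 ^ 2 * p.2 + p.1 ^ 2 - p.2 ^ 2 - 3 * p.2 + 10

lemma hG (p : ℝ × ℝ) :
    HasFDerivAt G (myClm (-8*p.1^3 + 24*p.1*p.2^2 + 24*p.1*p.2 + 2*p.1)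
      (-8*p.2^3 + 24*p.1^2*p.2 - 12*p.2^2 + 12*p.1^2 - 2*p.2 - 3)) p := by
  have h1 : HasFDerivAt (fun q : ℝ × ℝ => q.1) (ContinuousLinearMap.fst ℝ ℝ ℝ) p :=
    hasFDerivAt_fst
  have h2 : HasFDerivAt (fun q : ℝ × ℝ => q.2) (ContinuousLinearMap.snd ℝ ℝ ℝ) p :=
    hasFDerivAt_snd
  have x2 := h1.mul h1
  have y2 := h2.mul h2
  have x4 := x2.mul x2
  have y4 := y2.mul y2
  have y3 := y2.mul h2
  have H := ((((((((x4.const_mul (-2 : ℝ)).sub (y4.const_mul 2)).add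
    ((x2.const_mul 12).mul y2)).sub (y3.const_mul 4)).add
    ((x2.const_mul 12).mul h2)).add x2).sub y2).sub
    (h2.const_mul 3)).add_const 10
  convert H using 1
  any_goals with_reducible_and_instances rfl
  · funext q; simp [G]; ring
  · ext
    · simp [myClm]; ring
    · simp [myClm]; ring

lemma fderiv_G (p : ℝ × ℝ) :
    fderiv ℝ G p = myClm (-8*p.1^3 + 24*p.1*p.2^2 + 24*p.1*p.2 + 2*p.1)
      (-8*p.2^3 + 24*p.1^2*p.2 - 12*p.2^2 + 12*p.1^2 - 2*p.2 - 3) := (hG p).fderiv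

noncomputable def Gx : ℝ × ℝ → ℝ := fun p => -8*p.1^3 + 24*p.1*p.2^2 + 24*p.1*p.2 + 2*p.1
noncomputable def Gy : ℝ × ℝ → ℝ := fun p =>
  -8*p.2^3 + 24*p.1^2*p.2 - 12*p.2^2 + 12*p.1^2 - 2*p.2 - 3

lemma hGx (p : ℝ × ℝ) :
    HasFDerivAt Gx (myClm (-24*p.1^2 + 24*p.2^2 + 24*p.2 + 2) (48*p.1*p.2 + 24*p.1)) p := by
  have h1 : HasFDerivAt (fun q : ℝ × ℝ => q.1) (ContinuousLinearMap.fst ℝ ℝ ℝ) p :=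
    hasFDerivAt_fst
  have h2 : HasFDerivAt (fun q : ℝ × ℝ => q.2) (ContinuousLinearMap.snd ℝ ℝ ℝ) p :=
    hasFDerivAt_snd
  have x2 := h1.mul h1
  have y2 := h2.mul h2
  have H := ((((x2.mul h1).const_mul (-8 : ℝ)).add ((h1.mul y2).const_mul 24)).add
    ((h1.mul h2).const_mul 24)).add (h1.const_mul 2)
  convert H using 1
  any_goals with_reducible_and_instances rfl
  · funext q; simp [Gx]; ring
  · ext
    · simp [myClm]; ring
    · simp [myClm]; ring

lemma hGy (p : ℝ × ℝ) :
    HasFDerivAt Gy (myClm (48*p.1*p.2 + 24*p.1) (-24*p.2^2 + 24*p.1^2 - 24*p.2 - 2)) p := by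
  have h1 : HasFDerivAt (fun q : ℝ × ℝ => q.1) (ContinuousLinearMap.fst ℝ ℝ ℝ) p :=
    hasFDerivAt_fst
  have h2 : HasFDerivAt (fun q : ℝ × ℝ => q.2) (ContinuousLinearMap.snd ℝ ℝ ℝ) p :=
    hasFDerivAt_snd
  have x2 := h1.mul h1
  have y2 := h2.mul h2
  have H0 := (((((y2.mul h2).const_mul (-8 : ℝ)).add ((x2.mul h2).const_mul 24)).sub
    (y2.const_mul 12)).add (x2.const_mul 12)).sub (h2.const_mul 2)
  have H := H0.sub_const 3
  convert H using 1
  any_goals with_reducible_and_instances rfl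
  · funext q; simp [Gy]; ring
  · ext
    · simp [myClm]; ring
    · simp [myClm]; ring

lemma secondDeriv_aux (p : ℝ × ℝ) (v : ℝ × ℝ) :
    (fderiv ℝ (fun q => fderiv ℝ G q ((1:ℝ),(0:ℝ))) p) v =
      (-24*p.1^2 + 24*p.2^2 + 24*p.2 + 2) * v.1 + (48*p.1*p.2 + 24*p.1) * v.2 := by
  have : (fun q => fderiv ℝ G q ((1:ℝ),(0:ℝ))) = Gx := by
    funext q; rw [fderiv_G]; simp [Gx]
  rw [this, (hGx p).fderiv, myClm_apply]

lemma secondDeriv_aux' (p : ℝ × ℝ) (v : ℝ × ℝ) :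
    (fderiv ℝ (fun q => fderiv ℝ G q ((0:ℝ),(1:ℝ))) p) v =
      (48*p.1*p.2 + 24*p.1) * v.1 + (-24*p.2^2 + 24*p.1^2 - 24*p.2 - 2) * v.2 := by
  have : (fun q => fderiv ℝ G q ((0:ℝ),(1:ℝ))) = Gy := by
    funext q; rw [fderiv_G]; simp [Gy]
  rw [this, (hGy p).fderiv, myClm_apply]

/-- The Laplacian of a function on `ℝ × ℝ`. -/
noncomputable def lap (f : ℝ × ℝ → ℝ) (p : ℝ × ℝ) : ℝ :=
  fderiv ℝ (fun q => fderiv ℝ f q ((1 : ℝ), (0 : ℝ))) p ((1 : ℝ), (0 : ℝ)) +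
  fderiv ℝ (fun q => fderiv ℝ f q ((0 : ℝ), (1 : ℝ))) p ((0 : ℝ), (1 : ℝ))

/-- Second directional derivative. -/
noncomputable def secondDeriv (f : ℝ × ℝ → ℝ) (p v w : ℝ × ℝ) : ℝ :=
  fderiv ℝ (fun q => fderiv ℝ f q w) p v

theorem harmonic_polynomial_example (γ : ℝ × ℝ → ℝ)
    (hγ : γ = fun p : ℝ × ℝ =>
      -2 * p.1 ^ 4 - 2 * p.2 ^ 4 + 12 * p.1 ^ 2 * p.2 ^ 2 - 4 * p.2 ^ 3 +
        12 * p.1 ^ 2 * p.2 + p.1 ^ 2 - p.2 ^ 2 - 3 * p.2 + 10) :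
    (∀ p : ℝ × ℝ, lap γ p = 0) ∧
    (∀ x y : ℝ, γ (-x, y) = γ (x, y)) ∧
    (fderiv ℝ γ (-(1/2 : ℝ), (0 : ℝ)) = 0 ∧ fderiv ℝ γ ((1/2 : ℝ), (0 : ℝ)) = 0) ∧
    (secondDeriv γ (-(1/2), 0) (1, 0) (1, 0) * secondDeriv γ (-(1/2), 0) (0, 1) (0, 1) -
        secondDeriv γ (-(1/2), 0) (1, 0) (0, 1) * secondDeriv γ (-(1/2), 0) (0, 1) (1, 0) ≠ 0) ∧
    (secondDeriv γ ((1/2), 0) (1, 0) (1, 0) * secondDeriv γ ((1/2), 0) (0, 1) (0, 1) -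
        secondDeriv γ ((1/2), 0) (1, 0) (0, 1) * secondDeriv γ ((1/2), 0) (0, 1) (1, 0) ≠ 0) := by
  have hγG : γ = G := hγ
  subst hγG
  refine ⟨?_, ?_, ⟨?_, ?_⟩, ?_, ?_⟩
  · intro p
    simp only [lap, secondDeriv_aux, secondDeriv_aux']
    ring
  · intro x y; simp [G]; ring
  · rw [fderiv_G]
    ext
    · simp [myClm]; norm_num
    · simp [myClm]; norm_num
  · rw [fderiv_G]
    ext
    · simp [myClm]; norm_num
    · simp [myClm]; norm_num
  · simp only [secondDeriv, secondDeriv_aux, secondDeriv_aux']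
    norm_num
  · simp only [secondDeriv, secondDeriv_aux, secondDeriv_aux']
    norm_num
end

section
/- Define κ(ξ) := 8ξ²/(1+ξ²)² for ξ ∈ ℝ. Then the bounded harmonic extension of κ to the upper half-plane is Γ(ξ,μ) = 4·(2ξ² + μ(ξ² + (μ+1)²))/(ξ² + (μ+1)²)², i.e., Γ is harmonic on ℝ²₊ = {μ > 0}, bounded, continuous up to the boundary with Γ(ξ,0) = κ(ξ); and Γ has a unique critical point in ℝ²₊, located at (0,1), which is non-degenerate. -/
open MeasureTheory Real

noncomputable def GG : ℝ × ℝ → ℝ := fun p =>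
  4 * (2 * p.1 ^ 2 + p.2 * (p.1 ^ 2 + (p.2 + 1) ^ 2)) / (p.1 ^ 2 + (p.2 + 1) ^ 2) ^ 2

/-- x-partial of GG -/
noncomputable def gxF : ℝ × ℝ → ℝ := fun p =>
  (16 * p.1 * (p.1 ^ 2 + (p.2 + 1) ^ 2) - 8 * p.1 * p.2 * (p.1 ^ 2 + (p.2 + 1) ^ 2)
      - 32 * p.1 ^ 3) / (p.1 ^ 2 + (p.2 + 1) ^ 2) ^ 3

/-- y-partial of GG -/
noncomputable def gyF : ℝ × ℝ → ℝ := fun p =>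
  (4 * (p.1 ^ 2 + (p.2 + 1) ^ 2) ^ 2 - 8 * p.2 * (p.2 + 1) * (p.1 ^ 2 + (p.2 + 1) ^ 2)
      - 32 * p.1 ^ 2 * (p.2 + 1)) / (p.1 ^ 2 + (p.2 + 1) ^ 2) ^ 3

noncomputable def gxxF : ℝ × ℝ → ℝ := fun p =>
  ((16 * (p.1 ^ 2 + (p.2 + 1) ^ 2) + 32 * p.1 ^ 2 - 8 * p.2 * (p.1 ^ 2 + (p.2 + 1) ^ 2)
        - 16 * p.1 ^ 2 * p.2 - 96 * p.1 ^ 2) * (p.1 ^ 2 + (p.2 + 1) ^ 2)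
      - 6 * p.1 * (16 * p.1 * (p.1 ^ 2 + (p.2 + 1) ^ 2)
        - 8 * p.1 * p.2 * (p.1 ^ 2 + (p.2 + 1) ^ 2) - 32 * p.1 ^ 3)) /
    (p.1 ^ 2 + (p.2 + 1) ^ 2) ^ 4

noncomputable def gxyF : ℝ × ℝ → ℝ := fun p =>
  ((32 * p.1 * (p.2 + 1) - 8 * p.1 * (p.1 ^ 2 + (p.2 + 1) ^ 2)
        - 16 * p.1 * p.2 * (p.2 + 1)) * (p.1 ^ 2 + (p.2 + 1) ^ 2)
      - 6 * (p.2 + 1) * (16 * p.1 * (p.1 ^ 2 + (p.2 + 1) ^ 2)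
        - 8 * p.1 * p.2 * (p.1 ^ 2 + (p.2 + 1) ^ 2) - 32 * p.1 ^ 3)) /
    (p.1 ^ 2 + (p.2 + 1) ^ 2) ^ 4

noncomputable def gyxF : ℝ × ℝ → ℝ := fun p =>
  ((16 * p.1 * (p.1 ^ 2 + (p.2 + 1) ^ 2) - 16 * p.1 * p.2 * (p.2 + 1)
        - 64 * p.1 * (p.2 + 1)) * (p.1 ^ 2 + (p.2 + 1) ^ 2)
      - 6 * p.1 * (4 * (p.1 ^ 2 + (p.2 + 1) ^ 2) ^ 2
        - 8 * p.2 * (p.2 + 1) * (p.1 ^ 2 + (p.2 + 1) ^ 2) - 32 * p.1 ^ 2 * (p.2 + 1))) /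
    (p.1 ^ 2 + (p.2 + 1) ^ 2) ^ 4

noncomputable def gyyF : ℝ × ℝ → ℝ := fun p =>
  ((16 * (p.2 + 1) * (p.1 ^ 2 + (p.2 + 1) ^ 2) - 8 * (2 * p.2 + 1) * (p.1 ^ 2 + (p.2 + 1) ^ 2)
        - 16 * p.2 * (p.2 + 1) ^ 2 - 32 * p.1 ^ 2) * (p.1 ^ 2 + (p.2 + 1) ^ 2)
      - 6 * (p.2 + 1) * (4 * (p.1 ^ 2 + (p.2 + 1) ^ 2) ^ 2
        - 8 * p.2 * (p.2 + 1) * (p.1 ^ 2 + (p.2 + 1) ^ 2) - 32 * p.1 ^ 2 * (p.2 + 1))) /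
    (p.1 ^ 2 + (p.2 + 1) ^ 2) ^ 4

lemma fderiv_apply_e1 {F : ℝ × ℝ → ℝ} {p : ℝ × ℝ} {a : ℝ}
    (hF : DifferentiableAt ℝ F p) (h : HasDerivAt (fun t => F (t, p.2)) a p.1) :
    fderiv ℝ F p ((1 : ℝ), (0 : ℝ)) = a := by
  have hc : HasDerivAt (fun t : ℝ => ((t, p.2) : ℝ × ℝ)) ((1 : ℝ), (0 : ℝ)) p.1 :=
    (hasDerivAt_id' (x := p.1)).prodMk (hasDerivAt_const p.1 p.2)
  have hF' : HasFDerivAt F (fderiv ℝ F p) (p.1, p.2) := by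
    rw [Prod.mk.eta]; exact hF.hasFDerivAt
  have h2 : HasDerivAt (fun t => F (t, p.2)) (fderiv ℝ F p ((1 : ℝ), (0 : ℝ))) p.1 :=
    hF'.comp_hasDerivAt p.1 hc
  exact h2.unique h

lemma fderiv_apply_e2 {F : ℝ × ℝ → ℝ} {p : ℝ × ℝ} {a : ℝ}
    (hF : DifferentiableAt ℝ F p) (h : HasDerivAt (fun t => F (p.1, t)) a p.2) :
    fderiv ℝ F p ((0 : ℝ), (1 : ℝ)) = a := by
  have hc : HasDerivAt (fun t : ℝ => ((p.1, t) : ℝ × ℝ)) ((0 : ℝ), (1 : ℝ)) p.2 :=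
    (hasDerivAt_const p.2 p.1).prodMk (hasDerivAt_id' (x := p.2))
  have hF' : HasFDerivAt F (fderiv ℝ F p) (p.1, p.2) := by
    rw [Prod.mk.eta]; exact hF.hasFDerivAt
  have h2 : HasDerivAt (fun t => F (p.1, t)) (fderiv ℝ F p ((0 : ℝ), (1 : ℝ))) p.2 :=
    hF'.comp_hasDerivAt p.2 hc
  exact h2.unique h

lemma clm_zero_of_basis {L : (ℝ × ℝ) →L[ℝ] ℝ} (h1 : L ((1 : ℝ), (0 : ℝ)) = 0)
    (h2 : L ((0 : ℝ), (1 : ℝ)) = 0) : L = 0 := by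
  apply ContinuousLinearMap.ext
  intro v
  have hv : (v : ℝ × ℝ) = v.1 • ((1 : ℝ), (0 : ℝ)) + v.2 • ((0 : ℝ), (1 : ℝ)) := by
    apply Prod.ext <;> simp
  rw [hv, map_add, L.map_smul, L.map_smul, h1, h2]
  simp

lemma diff_GG {p : ℝ × ℝ} (hD : p.1 ^ 2 + (p.2 + 1) ^ 2 ≠ 0) : DifferentiableAt ℝ GG p := by
  have h1 : DifferentiableAt ℝ
      (fun q : ℝ × ℝ => 4 * (2 * q.1 ^ 2 + q.2 * (q.1 ^ 2 + (q.2 + 1) ^ 2))) p := by fun_prop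
  have h2 : DifferentiableAt ℝ (fun q : ℝ × ℝ => (q.1 ^ 2 + (q.2 + 1) ^ 2) ^ 2) p := by fun_prop
  exact h1.mul (h2.inv (pow_ne_zero 2 hD))

lemma diff_gx {p : ℝ × ℝ} (hD : p.1 ^ 2 + (p.2 + 1) ^ 2 ≠ 0) : DifferentiableAt ℝ gxF p := by
  have h1 : DifferentiableAt ℝ
      (fun q : ℝ × ℝ => 16 * q.1 * (q.1 ^ 2 + (q.2 + 1) ^ 2)
        - 8 * q.1 * q.2 * (q.1 ^ 2 + (q.2 + 1) ^ 2) - 32 * q.1 ^ 3) p := by fun_prop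
  have h2 : DifferentiableAt ℝ (fun q : ℝ × ℝ => (q.1 ^ 2 + (q.2 + 1) ^ 2) ^ 3) p := by fun_prop
  exact h1.mul (h2.inv (pow_ne_zero 3 hD))

lemma diff_gy {p : ℝ × ℝ} (hD : p.1 ^ 2 + (p.2 + 1) ^ 2 ≠ 0) : DifferentiableAt ℝ gyF p := by
  have h1 : DifferentiableAt ℝ
      (fun q : ℝ × ℝ => 4 * (q.1 ^ 2 + (q.2 + 1) ^ 2) ^ 2
        - 8 * q.2 * (q.2 + 1) * (q.1 ^ 2 + (q.2 + 1) ^ 2) - 32 * q.1 ^ 2 * (q.2 + 1)) p := by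
    fun_prop
  have h2 : DifferentiableAt ℝ (fun q : ℝ × ℝ => (q.1 ^ 2 + (q.2 + 1) ^ 2) ^ 3) p := by fun_prop
  exact h1.mul (h2.inv (pow_ne_zero 3 hD))

lemma fderiv_GG_e1 (p : ℝ × ℝ) (hD : p.1 ^ 2 + (p.2 + 1) ^ 2 ≠ 0) :
    fderiv ℝ GG p ((1 : ℝ), (0 : ℝ)) = gxF p := by
  obtain ⟨x, y⟩ := p
  simp only at hD
  apply fderiv_apply_e1 (diff_GG hD)
  show HasDerivAt (fun t : ℝ =>
    4 * (2 * t ^ 2 + y * (t ^ 2 + (y + 1) ^ 2)) / (t ^ 2 + (y + 1) ^ 2) ^ 2) (gxF (x, y)) x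
  have hsq : HasDerivAt (fun t : ℝ => t ^ 2) (2 * x) x := by simpa using hasDerivAt_pow 2 x
  have hd0 : HasDerivAt (fun t : ℝ => t ^ 2 + (y + 1) ^ 2) (2 * x) x := hsq.add_const _
  have hden : HasDerivAt (fun t : ℝ => (t ^ 2 + (y + 1) ^ 2) ^ 2)
      (2 * (x ^ 2 + (y + 1) ^ 2) * (2 * x)) x := by
    have := hd0.pow 2
    exact this.congr_deriv (by push_cast; ring)
  have hnum : HasDerivAt (fun t : ℝ => 4 * (2 * t ^ 2 + y * (t ^ 2 + (y + 1) ^ 2)))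
      (4 * (2 * (2 * x) + y * (2 * x))) x :=
    ((hsq.const_mul 2).add (hd0.const_mul y)).const_mul 4
  have h := hnum.div hden (pow_ne_zero 2 hD)
  refine h.congr_deriv ?_
  simp only [gxF]
  field_simp
  ring

lemma fderiv_GG_e2 (p : ℝ × ℝ) (hD : p.1 ^ 2 + (p.2 + 1) ^ 2 ≠ 0) :
    fderiv ℝ GG p ((0 : ℝ), (1 : ℝ)) = gyF p := by
  obtain ⟨x, y⟩ := p
  simp only at hD
  apply fderiv_apply_e2 (diff_GG hD)
  show HasDerivAt (fun t : ℝ =>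
    4 * (2 * x ^ 2 + t * (x ^ 2 + (t + 1) ^ 2)) / (x ^ 2 + (t + 1) ^ 2) ^ 2) (gyF (x, y)) y
  have hid : HasDerivAt (fun t : ℝ => t) 1 y := hasDerivAt_id' (x := y)
  have hd0 : HasDerivAt (fun t : ℝ => x ^ 2 + (t + 1) ^ 2) (2 * (y + 1)) y := by
    have := ((hid.add_const 1).pow 2).const_add (x ^ 2)
    exact this.congr_deriv (by push_cast; ring)
  have hden : HasDerivAt (fun t : ℝ => (x ^ 2 + (t + 1) ^ 2) ^ 2)
      (2 * (x ^ 2 + (y + 1) ^ 2) * (2 * (y + 1))) y := by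
    have := hd0.pow 2
    exact this.congr_deriv (by push_cast; ring)
  have hnum : HasDerivAt (fun t : ℝ => 4 * (2 * x ^ 2 + t * (x ^ 2 + (t + 1) ^ 2)))
      (4 * (1 * (x ^ 2 + (y + 1) ^ 2) + y * (2 * (y + 1)))) y := by
    have := ((hid.mul hd0).const_add (2 * x ^ 2)).const_mul 4
    exact this.congr_deriv (by ring)
  have h := hnum.div hden (pow_ne_zero 2 hD)
  refine h.congr_deriv ?_
  simp only [gyF]
  field_simp
  ring

lemma fderiv_gx_e1 (p : ℝ × ℝ) (hD : p.1 ^ 2 + (p.2 + 1) ^ 2 ≠ 0) :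
    fderiv ℝ gxF p ((1 : ℝ), (0 : ℝ)) = gxxF p := by
  obtain ⟨x, y⟩ := p
  simp only at hD
  apply fderiv_apply_e1 (diff_gx hD)
  show HasDerivAt (fun t : ℝ =>
    (16 * t * (t ^ 2 + (y + 1) ^ 2) - 8 * t * y * (t ^ 2 + (y + 1) ^ 2) - 32 * t ^ 3) /
      (t ^ 2 + (y + 1) ^ 2) ^ 3) (gxxF (x, y)) x
  have hsq : HasDerivAt (fun t : ℝ => t ^ 2) (2 * x) x := by simpa using hasDerivAt_pow 2 x
  have hcb : HasDerivAt (fun t : ℝ => t ^ 3) (3 * x ^ 2) x := by simpa using hasDerivAt_pow 3 x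
  have hid : HasDerivAt (fun t : ℝ => t) 1 x := hasDerivAt_id' (x := x)
  have hd0 : HasDerivAt (fun t : ℝ => t ^ 2 + (y + 1) ^ 2) (2 * x) x := hsq.add_const _
  have hden : HasDerivAt (fun t : ℝ => (t ^ 2 + (y + 1) ^ 2) ^ 3)
      (3 * (x ^ 2 + (y + 1) ^ 2) ^ 2 * (2 * x)) x := by
    have := hd0.pow 3
    exact this.congr_deriv (by push_cast; ring)
  have h1 : HasDerivAt (fun t : ℝ => 16 * t * (t ^ 2 + (y + 1) ^ 2))
      (16 * (x ^ 2 + (y + 1) ^ 2) + 16 * x * (2 * x)) x := by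
    have := (hid.const_mul 16).mul hd0
    exact this.congr_deriv (by ring)
  have h2 : HasDerivAt (fun t : ℝ => 8 * t * y * (t ^ 2 + (y + 1) ^ 2))
      (8 * y * (x ^ 2 + (y + 1) ^ 2) + 8 * x * y * (2 * x)) x := by
    have hl : HasDerivAt (fun t : ℝ => 8 * t * y) (8 * y) x := by
      have := (hid.const_mul 8).mul_const y
      exact this.congr_deriv (by ring)
    have := hl.mul hd0
    exact this.congr_deriv (by ring)
  have h3 : HasDerivAt (fun t : ℝ => 32 * t ^ 3) (32 * (3 * x ^ 2)) x := hcb.const_mul 32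
  have hnum := (h1.sub h2).sub h3
  have h := hnum.div hden (pow_ne_zero 3 hD)
  refine h.congr_deriv ?_
  simp only [gxxF, Pi.sub_apply]
  field_simp
  ring

lemma fderiv_gx_e2 (p : ℝ × ℝ) (hD : p.1 ^ 2 + (p.2 + 1) ^ 2 ≠ 0) :
    fderiv ℝ gxF p ((0 : ℝ), (1 : ℝ)) = gxyF p := by
  obtain ⟨x, y⟩ := p
  simp only at hD
  apply fderiv_apply_e2 (diff_gx hD)
  show HasDerivAt (fun t : ℝ =>
    (16 * x * (x ^ 2 + (t + 1) ^ 2) - 8 * x * t * (x ^ 2 + (t + 1) ^ 2) - 32 * x ^ 3) /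
      (x ^ 2 + (t + 1) ^ 2) ^ 3) (gxyF (x, y)) y
  have hid : HasDerivAt (fun t : ℝ => t) 1 y := hasDerivAt_id' (x := y)
  have hd0 : HasDerivAt (fun t : ℝ => x ^ 2 + (t + 1) ^ 2) (2 * (y + 1)) y := by
    have := ((hid.add_const 1).pow 2).const_add (x ^ 2)
    exact this.congr_deriv (by push_cast; ring)
  have hden : HasDerivAt (fun t : ℝ => (x ^ 2 + (t + 1) ^ 2) ^ 3)
      (3 * (x ^ 2 + (y + 1) ^ 2) ^ 2 * (2 * (y + 1))) y := by
    have := hd0.pow 3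
    exact this.congr_deriv (by push_cast; ring)
  have h1 : HasDerivAt (fun t : ℝ => 16 * x * (x ^ 2 + (t + 1) ^ 2))
      (16 * x * (2 * (y + 1))) y := by
    have := hd0.const_mul (16 * x)
    exact this.congr_deriv (by ring)
  have h2 : HasDerivAt (fun t : ℝ => 8 * x * t * (x ^ 2 + (t + 1) ^ 2))
      (8 * x * (x ^ 2 + (y + 1) ^ 2) + 8 * x * y * (2 * (y + 1))) y := by
    have hl : HasDerivAt (fun t : ℝ => 8 * x * t) (8 * x) y := by
      have := hid.const_mul (8 * x)
      exact this.congr_deriv (by ring)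
    have := hl.mul hd0
    exact this.congr_deriv (by ring)
  have h3 : HasDerivAt (fun _ : ℝ => 32 * x ^ 3) 0 y := hasDerivAt_const y _
  have hnum := (h1.sub h2).sub h3
  have h := hnum.div hden (pow_ne_zero 3 hD)
  refine h.congr_deriv ?_
  simp only [gxyF, Pi.sub_apply]
  field_simp
  ring

lemma fderiv_gy_e1 (p : ℝ × ℝ) (hD : p.1 ^ 2 + (p.2 + 1) ^ 2 ≠ 0) :
    fderiv ℝ gyF p ((1 : ℝ), (0 : ℝ)) = gyxF p := by
  obtain ⟨x, y⟩ := p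
  simp only at hD
  apply fderiv_apply_e1 (diff_gy hD)
  show HasDerivAt (fun t : ℝ =>
    (4 * (t ^ 2 + (y + 1) ^ 2) ^ 2 - 8 * y * (y + 1) * (t ^ 2 + (y + 1) ^ 2)
      - 32 * t ^ 2 * (y + 1)) / (t ^ 2 + (y + 1) ^ 2) ^ 3) (gyxF (x, y)) x
  have hsq : HasDerivAt (fun t : ℝ => t ^ 2) (2 * x) x := by simpa using hasDerivAt_pow 2 x
  have hd0 : HasDerivAt (fun t : ℝ => t ^ 2 + (y + 1) ^ 2) (2 * x) x := hsq.add_const _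
  have hden : HasDerivAt (fun t : ℝ => (t ^ 2 + (y + 1) ^ 2) ^ 3)
      (3 * (x ^ 2 + (y + 1) ^ 2) ^ 2 * (2 * x)) x := by
    have := hd0.pow 3
    exact this.congr_deriv (by push_cast; ring)
  have h1 : HasDerivAt (fun t : ℝ => 4 * (t ^ 2 + (y + 1) ^ 2) ^ 2)
      (4 * (2 * (x ^ 2 + (y + 1) ^ 2) * (2 * x))) x := by
    have h0 : HasDerivAt (fun t : ℝ => (t ^ 2 + (y + 1) ^ 2) ^ 2)
        (2 * (x ^ 2 + (y + 1) ^ 2) * (2 * x)) x := by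
      have := hd0.pow 2
      exact this.congr_deriv (by push_cast; ring)
    exact h0.const_mul 4
  have h2 : HasDerivAt (fun t : ℝ => 8 * y * (y + 1) * (t ^ 2 + (y + 1) ^ 2))
      (8 * y * (y + 1) * (2 * x)) x := hd0.const_mul _
  have h3 : HasDerivAt (fun t : ℝ => 32 * t ^ 2 * (y + 1)) (32 * (y + 1) * (2 * x)) x := by
    have := (hsq.const_mul 32).mul_const (y + 1)
    exact this.congr_deriv (by ring)
  have hnum := (h1.sub h2).sub h3
  have h := hnum.div hden (pow_ne_zero 3 hD)
  refine h.congr_deriv ?_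
  simp only [gyxF, Pi.sub_apply]
  field_simp
  ring

lemma fderiv_gy_e2 (p : ℝ × ℝ) (hD : p.1 ^ 2 + (p.2 + 1) ^ 2 ≠ 0) :
    fderiv ℝ gyF p ((0 : ℝ), (1 : ℝ)) = gyyF p := by
  obtain ⟨x, y⟩ := p
  simp only at hD
  apply fderiv_apply_e2 (diff_gy hD)
  show HasDerivAt (fun t : ℝ =>
    (4 * (x ^ 2 + (t + 1) ^ 2) ^ 2 - 8 * t * (t + 1) * (x ^ 2 + (t + 1) ^ 2)
      - 32 * x ^ 2 * (t + 1)) / (x ^ 2 + (t + 1) ^ 2) ^ 3) (gyyF (x, y)) y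
  have hid : HasDerivAt (fun t : ℝ => t) 1 y := hasDerivAt_id' (x := y)
  have hd0 : HasDerivAt (fun t : ℝ => x ^ 2 + (t + 1) ^ 2) (2 * (y + 1)) y := by
    have := ((hid.add_const 1).pow 2).const_add (x ^ 2)
    exact this.congr_deriv (by push_cast; ring)
  have hden : HasDerivAt (fun t : ℝ => (x ^ 2 + (t + 1) ^ 2) ^ 3)
      (3 * (x ^ 2 + (y + 1) ^ 2) ^ 2 * (2 * (y + 1))) y := by
    have := hd0.pow 3
    exact this.congr_deriv (by push_cast; ring)
  have h1 : HasDerivAt (fun t : ℝ => 4 * (x ^ 2 + (t + 1) ^ 2) ^ 2)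
      (4 * (2 * (x ^ 2 + (y + 1) ^ 2) * (2 * (y + 1)))) y := by
    have h0 : HasDerivAt (fun t : ℝ => (x ^ 2 + (t + 1) ^ 2) ^ 2)
        (2 * (x ^ 2 + (y + 1) ^ 2) * (2 * (y + 1))) y := by
      have := hd0.pow 2
      exact this.congr_deriv (by push_cast; ring)
    exact h0.const_mul 4
  have h2 : HasDerivAt (fun t : ℝ => 8 * t * (t + 1) * (x ^ 2 + (t + 1) ^ 2))
      ((8 * (y + 1) + 8 * y) * (x ^ 2 + (y + 1) ^ 2) + 8 * y * (y + 1) * (2 * (y + 1))) y := by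
    have hl : HasDerivAt (fun t : ℝ => 8 * t * (t + 1)) (8 * (y + 1) + 8 * y) y := by
      have := (hid.const_mul 8).mul (hid.add_const 1)
      exact this.congr_deriv (by ring)
    have := hl.mul hd0
    exact this.congr_deriv (by ring)
  have h3 : HasDerivAt (fun t : ℝ => 32 * x ^ 2 * (t + 1)) (32 * x ^ 2) y := by
    have := (hid.add_const 1).const_mul (32 * x ^ 2)
    exact this.congr_deriv (by ring)
  have hnum := (h1.sub h2).sub h3
  have h := hnum.div hden (pow_ne_zero 3 hD)
  refine h.congr_deriv ?_
  simp only [gyyF, Pi.sub_apply]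
  field_simp
  ring

lemma ev_ne {p : ℝ × ℝ} (hD : p.1 ^ 2 + (p.2 + 1) ^ 2 ≠ 0) :
    ∀ᶠ q in nhds p, q.1 ^ 2 + (q.2 + 1) ^ 2 ≠ 0 := by
  have hcont : ContinuousAt (fun q : ℝ × ℝ => q.1 ^ 2 + (q.2 + 1) ^ 2) p := by fun_prop
  exact hcont.eventually_ne hD

lemma D_pos {p : ℝ × ℝ} (hp : 0 ≤ p.2) : 0 < p.1 ^ 2 + (p.2 + 1) ^ 2 := by
  nlinarith [sq_nonneg p.1, sq_nonneg p.2]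

theorem explicit_extension_example (κ : ℝ → ℝ)
    (hκ : κ = fun ξ : ℝ => 8 * ξ ^ 2 / (1 + ξ ^ 2) ^ 2)
    (Γ : ℝ × ℝ → ℝ)
    (hΓ : Γ = fun p : ℝ × ℝ =>
      4 * (2 * p.1 ^ 2 + p.2 * (p.1 ^ 2 + (p.2 + 1) ^ 2)) / (p.1 ^ 2 + (p.2 + 1) ^ 2) ^ 2) :
    (∀ p : ℝ × ℝ, 0 < p.2 → lap Γ p = 0) ∧
    (∃ C : ℝ, ∀ p : ℝ × ℝ, 0 < p.2 → |Γ p| ≤ C) ∧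
    ContinuousOn Γ {p : ℝ × ℝ | 0 ≤ p.2} ∧
    (∀ ξ : ℝ, Γ (ξ, 0) = κ ξ) ∧
    (∀ p : ℝ × ℝ, 0 < p.2 → (fderiv ℝ Γ p = 0 ↔ p = ((0 : ℝ), (1 : ℝ)))) ∧
    (secondDeriv Γ (0, 1) (1, 0) (1, 0) * secondDeriv Γ (0, 1) (0, 1) (0, 1) -
        secondDeriv Γ (0, 1) (1, 0) (0, 1) * secondDeriv Γ (0, 1) (0, 1) (1, 0) ≠ 0) := by
  have hG : Γ = GG := hΓ
  subst hG
  subst hκ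
  refine ⟨?_, ?_, ?_, ?_, ?_, ?_⟩
  · -- harmonic
    intro p hp
    have hD : p.1 ^ 2 + (p.2 + 1) ^ 2 ≠ 0 := ne_of_gt (D_pos hp.le)
    have hev1 : (fun q => fderiv ℝ GG q ((1 : ℝ), (0 : ℝ))) =ᶠ[nhds p] gxF := by
      filter_upwards [ev_ne hD] with q hq
      exact fderiv_GG_e1 q hq
    have hev2 : (fun q => fderiv ℝ GG q ((0 : ℝ), (1 : ℝ))) =ᶠ[nhds p] gyF := by
      filter_upwards [ev_ne hD] with q hq
      exact fderiv_GG_e2 q hq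
    unfold lap
    rw [hev1.fderiv_eq, hev2.fderiv_eq, fderiv_gx_e1 p hD, fderiv_gy_e2 p hD]
    simp only [gxxF, gyyF]
    field_simp
    ring
  · -- bounded
    refine ⟨12, fun p hp => ?_⟩
    have hD : 0 < p.1 ^ 2 + (p.2 + 1) ^ 2 := D_pos hp.le
    rw [abs_le]
    constructor
    · have h : 0 ≤ GG p := by
        apply div_nonneg _ (by positivity)
        nlinarith [sq_nonneg p.1]
      linarith
    · show 4 * (2 * p.1 ^ 2 + p.2 * (p.1 ^ 2 + (p.2 + 1) ^ 2)) / (p.1 ^ 2 + (p.2 + 1) ^ 2) ^ 2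
        ≤ 12
      rw [div_le_iff₀ (by positivity)]
      nlinarith [sq_nonneg p.1, sq_nonneg p.2, sq_nonneg (p.1 * p.2), sq_nonneg (p.1 * (p.2 + 1)),
        sq_nonneg (p.1 ^ 2 - (p.2 + 1) ^ 2), mul_pos hp hp]
  · -- continuous on
    apply ContinuousOn.div (by fun_prop) (by fun_prop)
    intro p hp
    exact pow_ne_zero 2 (ne_of_gt (D_pos hp))
  · -- boundary value
    intro ξ
    show 4 * (2 * ξ ^ 2 + 0 * (ξ ^ 2 + (0 + 1) ^ 2)) / (ξ ^ 2 + (0 + 1) ^ 2) ^ 2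
      = 8 * ξ ^ 2 / (1 + ξ ^ 2) ^ 2
    have h1 : ξ ^ 2 + ((0 : ℝ) + 1) ^ 2 = 1 + ξ ^ 2 := by ring
    rw [h1]
    ring
  · -- critical point
    intro p hp
    have hD : p.1 ^ 2 + (p.2 + 1) ^ 2 ≠ 0 := ne_of_gt (D_pos hp.le)
    constructor
    · intro h
      have hx : gxF p = 0 := by rw [← fderiv_GG_e1 p hD, h]; simp
      have hy : gyF p = 0 := by rw [← fderiv_GG_e2 p hD, h]; simp
      obtain ⟨x, y⟩ := p
      simp only at hD hp
      simp only [gxF] at hx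
      simp only [gyF] at hy
      have hA : 16 * x * (x ^ 2 + (y + 1) ^ 2) - 8 * x * y * (x ^ 2 + (y + 1) ^ 2)
          - 32 * x ^ 3 = 0 := by
        rcases div_eq_zero_iff.mp hx with h | h
        · exact h
        · exact absurd h (pow_ne_zero 3 hD)
      have hB : 4 * (x ^ 2 + (y + 1) ^ 2) ^ 2 - 8 * y * (y + 1) * (x ^ 2 + (y + 1) ^ 2)
          - 32 * x ^ 2 * (y + 1) = 0 := by
        rcases div_eq_zero_iff.mp hy with h | h
        · exact h
        · exact absurd h (pow_ne_zero 3 hD)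
      have hx0 : x = 0 := by
        by_contra hxne
        have hE1 : (2 - y) * (y + 1) ^ 2 - (y + 2) * x ^ 2 = 0 := by
          have h8 : (8 * x) * ((2 - y) * (y + 1) ^ 2 - (y + 2) * x ^ 2) = 0 := by
            linear_combination hA
          rcases mul_eq_zero.mp h8 with h | h
          · exact absurd h (by simpa using hxne)
          · exact h
        have hkey : (64 : ℝ) * (y + 1) ^ 3 = 0 := by
          linear_combination (-4 * (y + 2) * x ^ 2 + 4 * y ^ 3 + 24 * y ^ 2 + 60 * y + 40) * hE1
            - (y + 2) ^ 2 * hB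
        nlinarith [hkey]
      subst hx0
      have hy1 : y = 1 := by
        have h14 : (1 - y) * (4 * (y + 1) ^ 3) = 0 := by linear_combination hB
        rcases mul_eq_zero.mp h14 with h | h
        · linarith
        · nlinarith [h]
      subst hy1
      rfl
    · intro h
      subst h
      apply clm_zero_of_basis
      · rw [fderiv_GG_e1 _ hD]
        simp only [gxF]
        norm_num
      · rw [fderiv_GG_e2 _ hD]
        simp only [gyF]
        norm_num
  · -- nondegenerate
    have hD : ((0 : ℝ), (1 : ℝ)).1 ^ 2 + (((0 : ℝ), (1 : ℝ)).2 + 1) ^ 2 ≠ 0 := by norm_num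
    have hev1 : (fun q => fderiv ℝ GG q ((1 : ℝ), (0 : ℝ))) =ᶠ[nhds ((0 : ℝ), (1 : ℝ))] gxF := by
      filter_upwards [ev_ne hD] with q hq
      exact fderiv_GG_e1 q hq
    have hev2 : (fun q => fderiv ℝ GG q ((0 : ℝ), (1 : ℝ))) =ᶠ[nhds ((0 : ℝ), (1 : ℝ))] gyF := by
      filter_upwards [ev_ne hD] with q hq
      exact fderiv_GG_e2 q hq
    unfold secondDeriv
    rw [hev1.fderiv_eq, hev2.fderiv_eq, fderiv_gx_e1 _ hD, fderiv_gy_e2 _ hD,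
      fderiv_gx_e2 _ hD, fderiv_gy_e1 _ hD]
    simp only [gxxF, gyyF, gxyF, gyxF]
    norm_num
end
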